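/- For every integer k ≥ 0, setting x = 4k+3, the Frobenius number of the quadruple (x, 3x+2, 9x+8, 27x+26) = (4k+3, 12k+11, 36k+35, 108k+107) equals 48k² + 64k + 19 − 3(4k+3)·(k + ⌊(2k+1)/13⌋ + ⌊(2k+7)/13⌋ − ⌊(k+3)/13⌋). -/

import Mathlib

/-- Minimal cost `3y+9z+27w` to represent `v = y+4z+13w`. -/
def Ffr (v : ℕ) : ℕ := 27*(v/13) + 9*(v%13/4) + 3*(v%13%4)

lemma Ffr_le (y z w : ℕ) : Ffr (y+4*z+13*w) ≤ 3*y+9*z+27*w := by unfold Ffr; omega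

lemma Ffr_mono {v v' : ℕ} (h : v ≤ v') : Ffr v ≤ Ffr v' := by unfold Ffr; omega

lemma Ffr_key (k : ℕ) :
    Ffr (4*k+2) + 3*(k + (2*k+1)/13 + (2*k+7)/13 - (k+3)/13) = 12*k+6 := by
  unfold Ffr
  obtain ⟨q, r, hr, rfl⟩ : ∃ q r, r < 13 ∧ k = 13*q + r :=
    ⟨k/13, k%13, Nat.mod_lt _ (by norm_num), by omega⟩
  interval_cases r <;> omega

lemma mem_closure_quad (a b c d n : ℕ) :
    n ∈ AddSubmonoid.closure ({a, b, c, d} : Set ℕ) ↔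
      ∃ x y z w : ℕ, n = x*a + y*b + z*c + w*d := by
  constructor
  · intro hn
    induction hn using AddSubmonoid.closure_induction with
    | mem g hg =>
      rcases hg with h | h | h | h
      · exact ⟨1, 0, 0, 0, by simp [h]⟩
      · exact ⟨0, 1, 0, 0, by simp [h]⟩
      · exact ⟨0, 0, 1, 0, by simp [h]⟩
      · exact ⟨0, 0, 0, 1, by simp [Set.mem_singleton_iff.mp h]⟩
    | zero => exact ⟨0, 0, 0, 0, by simp⟩
    | add p q _ _ hp hq =>
      obtain ⟨x1, y1, z1, w1, h1⟩ := hp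
      obtain ⟨x2, y2, z2, w2, h2⟩ := hq
      exact ⟨x1+x2, y1+y2, z1+z2, w1+w2, by subst h1 h2; ring⟩
  · rintro ⟨x, y, z, w, rfl⟩
    have ha : a ∈ AddSubmonoid.closure ({a, b, c, d} : Set ℕ) :=
      AddSubmonoid.subset_closure (by simp)
    have hb : b ∈ AddSubmonoid.closure ({a, b, c, d} : Set ℕ) :=
      AddSubmonoid.subset_closure (by simp)
    have hc : c ∈ AddSubmonoid.closure ({a, b, c, d} : Set ℕ) :=
      AddSubmonoid.subset_closure (by simp)
    have hd : d ∈ AddSubmonoid.closure ({a, b, c, d} : Set ℕ) :=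
      AddSubmonoid.subset_closure (by simp)
    refine AddSubmonoid.add_mem _ (AddSubmonoid.add_mem _ (AddSubmonoid.add_mem _ ?_ ?_) ?_) ?_
    · simpa using AddSubmonoid.nsmul_mem _ ha x
    · simpa using AddSubmonoid.nsmul_mem _ hb y
    · simpa using AddSubmonoid.nsmul_mem _ hc z
    · simpa using AddSubmonoid.nsmul_mem _ hd w

/-- Elements of the semigroup are exactly `a*u + 2*v` with `u ≥ Ffr v`, for `a = 4k+3`. -/
lemma mem_closure_iff_rep (k n : ℕ) :
    n ∈ AddSubmonoid.closure ({4*k+3, 12*k+11, 36*k+35, 108*k+107} : Set ℕ) ↔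
      ∃ u v : ℕ, Ffr v ≤ u ∧ n = (4*k+3)*u + 2*v := by
  rw [mem_closure_quad]
  constructor
  · rintro ⟨x, y, z, w, rfl⟩
    refine ⟨x + 3*y + 9*z + 27*w, y + 4*z + 13*w, ?_, by ring⟩
    calc Ffr (y + 4*z + 13*w) ≤ 3*y + 9*z + 27*w := Ffr_le y z w
      _ ≤ x + 3*y + 9*z + 27*w := by omega
  · rintro ⟨u, v, hu, rfl⟩
    refine ⟨u - Ffr v, v%13%4, v%13/4, v/13, ?_⟩
    have h1 : (v%13%4) + 4*(v%13/4) + 13*(v/13) = v := by omega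
    have h2 : (u - Ffr v) + (3*(v%13%4) + 9*(v%13/4) + 27*(v/13)) = u := by
      unfold Ffr at hu ⊢; omega
    calc (4*k+3)*u + 2*v
        = (4*k+3)*((u - Ffr v) + (3*(v%13%4) + 9*(v%13/4) + 27*(v/13)))
          + 2*((v%13%4) + 4*(v%13/4) + 13*(v/13)) := by rw [h1, h2]
      _ = _ := by ring

/-- For every integer `k ≥ 0`, with `x = 4k+3`, the Frobenius number of the quadruple
`(x, 3x+2, 9x+8, 27x+26) = (4k+3, 12k+11, 36k+35, 108k+107)` equals
`48k² + 64k + 19 − 3(4k+3)·(k + ⌊(2k+1)/13⌋ + ⌊(2k+7)/13⌋ − ⌊(k+3)/13⌋)`. -/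
theorem frobenius_recursive_4k3 (k : ℕ) :
    FrobeniusNumber
      (48 * k ^ 2 + 64 * k + 19 -
        3 * (4 * k + 3) * (k + (2 * k + 1) / 13 + (2 * k + 7) / 13 - (k + 3) / 13))
      ({4 * k + 3, 12 * k + 11, 36 * k + 35, 108 * k + 107} : Set ℕ) := by
  set a : ℕ := 4*k+3 with ha
  set T : ℕ := k + (2*k+1)/13 + (2*k+7)/13 - (k+3)/13 with hT
  set F0 : ℕ := Ffr (4*k+2) with hF0
  have hF0k : F0 + 3*T = 12*k+6 := Ffr_key k
  have hF01 : 1 ≤ F0 := by omega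
  -- the target number in convenient form
  have hNkey : 48*k^2 + 64*k + 19 - 3*a*T = a*(F0-1) + (8*k+4) := by
    have h1 : a*(F0-1) + a*(3*T) = a*(12*k+5) := by
      rw [← Nat.mul_add]; congr 1; omega
    have h2 : a*(12*k+5) = 48*k^2 + 56*k + 15 := by rw [ha]; ring
    have h3 : a*(3*T) = 3*a*T := by ring
    omega
  have hform :
      48 * k ^ 2 + 64 * k + 19 -
        3 * (4 * k + 3) * (k + (2 * k + 1) / 13 + (2 * k + 7) / 13 - (k + 3) / 13)
      = a*(F0-1) + (8*k+4) := hNkey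
  rw [hform]
  constructor
  · -- not representable
    intro hmem
    rw [ha] at hmem
    rw [mem_closure_iff_rep] at hmem
    rw [← ha] at hmem
    obtain ⟨u, v, hu, heq⟩ := hmem
    -- a*u + 2*v = a*(F0-1) + (8*k+4)
    rcases le_or_gt u (F0 - 1) with hle | hlt
    · -- 2*v = a*(F0-1-u) + 8*k+4
      have hd : a*(F0-1-u) + (8*k+4) = 2*v := by
        have : a*(F0-1-u) + a*u = a*(F0-1) := by rw [← Nat.mul_add]; congr 1; omega
        omega
      set d : ℕ := F0 - 1 - u with hdd
      rcases Nat.even_or_odd d with he | ho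
      · obtain ⟨t, ht⟩ := he
        have hv : v = a*t + (4*k+2) := by
          have : a*d = a*t + a*t := by rw [ht]; ring
          have hat : a*t = (4*k+3)*t := rfl
          omega
        have hFv : F0 ≤ Ffr v := by
          apply Ffr_mono; rw [hv]; omega
        omega
      · have hodd : Odd (a*d) := by
          refine Odd.mul ?_ ho
          exact ⟨2*k+1, by omega⟩
        obtain ⟨j, hj⟩ := hodd
        omega
    · -- u ≥ F0: a*(u-(F0-1)) + 2*v = 8*k+4, but a*(u-(F0-1)) ≥ a and parity
      have hd : a*(u-(F0-1)) + 2*v = 8*k+4 := by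
        have : a*(u-(F0-1)) + a*(F0-1) = a*u := by rw [← Nat.mul_add]; congr 1; omega
        omega
      set e : ℕ := u - (F0-1) with hee
      have he1 : 1 ≤ e := by omega
      rcases Nat.even_or_odd e with hev | ho
      · obtain ⟨t, ht⟩ := hev
        have ht1 : 1 ≤ t := by omega
        have : a*e = a*t + a*t := by rw [ht]; ring
        have hat : (4*k+3) ≤ a*t := Nat.le_mul_of_pos_right _ ht1
        omega
      · have hodd : Odd (a*e) := Odd.mul ⟨2*k+1, by omega⟩ ho
        obtain ⟨j, hj⟩ := hodd
        omega
  · -- maximality: m not representable → m ≤ N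
    intro m hm
    by_contra hgt
    push_neg at hgt
    apply hm
    rw [ha, mem_closure_iff_rep, ← ha]
    -- find v0 < a with 2*v0 ≡ m [MOD a]
    set v0 : ℕ := (m * (2*k+2)) % a with hv0
    have hv0lt : v0 < a := Nat.mod_lt _ (by omega)
    have hmod : 2*v0 ≡ m [MOD a] := by
      calc 2*v0 ≡ 2*(m*(2*k+2)) [MOD a] := (Nat.mod_modEq (m*(2*k+2)) a).mul_left 2
        _ = m*a + m := by show 2*(m*(2*k+2)) = m*(4*k+3) + m; ring
        _ ≡ m [MOD a] := by
          unfold Nat.ModEq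
          rw [Nat.add_comm, Nat.add_mul_mod_self_right]
    have hm2v0 : 2*v0 ≤ m := by omega
    obtain ⟨u, hu⟩ : a ∣ m - 2*v0 := (Nat.modEq_iff_dvd' hm2v0).mp hmod
    refine ⟨u, v0, ?_, by omega⟩
    by_contra hult
    push_neg at hult
    have hFv0 : Ffr v0 ≤ F0 := Ffr_mono (by omega)
    have h1 : a*u ≤ a*(F0-1) := Nat.mul_le_mul_left a (by omega)
    omega
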